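/- arXiv:2002.00315 — 2 statements merged into one kernel-verified Lean document; each statement's English description precedes it below -/
import Mathlib

section
/- Fix integers K ≥ 2 and T ≥ 1 and a nonempty subset C ⊆ [K]. Let Ω = {p ∈ Δ(K) : p_i ≥ 1/(|C|·T) for all i ∈ C, and p_i = 0 for all i ∉ C}. Let p̃_1 be the uniform distribution on C, let ℓ̃_1, …, ℓ̃_T ∈ ℝ^K be nonnegative vectors, define η_t = 1/√(1 + Σ_{τ=1}^t Σ_{i=1}^K p̃_{τ,i}·ℓ̃_{τ,i}²) and ψ_t(p) = (1/η_t)·Σ_{i∈C} p_i ln p_i, and for each t let p̃_{t+1} be a minimizer over Ω of p ↦ ⟨p, ℓ̃_t⟩ + D_{ψ_t}(p, p̃_t). Let ρ = max{1, max_{t∈[T], i∈C} ℓ̃_{t,i}}. Then for every i ∈ C: Σ_{t=1}^T ⟨p̃_t − e_i, ℓ̃_t⟩ ≤ 25·ρ·ln²(KT) + 10·ln(KT)·√(ρ·Σ_{t=1}^T ℓ̃_{t,i}). -/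
open Finset

/-- Bregman divergence `D_ψ(x,y) = ψ(x) − ψ(y) − ⟨∇ψ(y), x − y⟩`. -/
noncomputable def breg {K : ℕ} (ψ : (Fin K → ℝ) → ℝ) (x y : Fin K → ℝ) : ℝ :=
  ψ x - ψ y - fderiv ℝ ψ y (x - y)


lemma exp_neg_le_quad {a : ℝ} (ha : 0 ≤ a) : Real.exp (-a) ≤ 1 - a + a ^ 2 / 2 := by
  have hq := Real.quadratic_le_exp_of_nonneg ha
  have he : (0:ℝ) < Real.exp a := Real.exp_pos a
  have hpos : (0:ℝ) < 1 - a + a ^ 2 / 2 := by nlinarith [sq_nonneg (a - 1)]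
  have key : (1:ℝ) ≤ (1 - a + a ^ 2 / 2) * Real.exp a := by
    nlinarith [mul_le_mul_of_nonneg_left hq hpos.le, sq_nonneg (a^2), sq_nonneg a]
  rw [Real.exp_neg, inv_le_iff_one_le_mul₀ he]
  linarith [key]
open Finset

/-- Gibbs' inequality: nonnegativity of relative entropy. -/
lemma kl_nonneg {K : ℕ} (C : Finset (Fin K)) (x y : Fin K → ℝ)
    (hx : ∀ i ∈ C, 0 < x i) (hy : ∀ i ∈ C, 0 < y i)
    (hsx : ∑ i ∈ C, x i = 1) (hsy : ∑ i ∈ C, y i = 1) :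
    0 ≤ ∑ i ∈ C, x i * Real.log (x i / y i) := by
  have key : ∀ i ∈ C, x i * Real.log (y i / x i) ≤ y i - x i := by
    intro i hi
    have h1 : 0 < y i / x i := div_pos (hy i hi) (hx i hi)
    have h2 := Real.log_le_sub_one_of_pos h1
    have h3 : x i * Real.log (y i / x i) ≤ x i * (y i / x i - 1) :=
      mul_le_mul_of_nonneg_left h2 (hx i hi).le
    have h4 : x i * (y i / x i - 1) = y i - x i := by
      have := (hx i hi).ne'
      field_simp
    linarith
  have hsum := Finset.sum_le_sum key
  have heq : ∀ i ∈ C, x i * Real.log (x i / y i) = -(x i * Real.log (y i / x i)) := by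
    intro i hi
    rw [Real.log_div (hx i hi).ne' (hy i hi).ne', Real.log_div (hy i hi).ne' (hx i hi).ne']
    ring
  rw [Finset.sum_congr rfl heq, Finset.sum_neg_distrib]
  rw [Finset.sum_sub_distrib, hsx, hsy] at hsum
  linarith

/-- Upper bound on relative entropy against a lower-bounded distribution. -/
lemma kl_le_log {K : ℕ} (C : Finset (Fin K)) (x y : Fin K → ℝ) (M : ℝ) (hM : 0 < M)
    (hx : ∀ i ∈ C, 0 < x i) (hx1 : ∀ i ∈ C, x i ≤ 1)
    (hy : ∀ i ∈ C, 1 / M ≤ y i)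
    (hsx : ∑ i ∈ C, x i = 1) :
    ∑ i ∈ C, x i * Real.log (x i / y i) ≤ Real.log M := by
  have key : ∀ i ∈ C, x i * Real.log (x i / y i) ≤ x i * Real.log M := by
    intro i hi
    have hyi : 0 < y i := lt_of_lt_of_le (by positivity) (hy i hi)
    have h1 : Real.log (x i / y i) ≤ Real.log M := by
      rw [Real.log_div (hx i hi).ne' hyi.ne']
      have hlx : Real.log (x i) ≤ 0 := Real.log_nonpos (hx i hi).le (hx1 i hi)
      have hinv : Real.log M = -Real.log (1 / M) := by
        rw [Real.log_div one_ne_zero hM.ne']; simp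
      have h2 : Real.log (1 / M) ≤ Real.log (y i) :=
        Real.log_le_log (by positivity) (hy i hi)
      linarith
    exact mul_le_mul_of_nonneg_left h1 (hx i hi).le
  calc ∑ i ∈ C, x i * Real.log (x i / y i) ≤ ∑ i ∈ C, x i * Real.log M :=
        Finset.sum_le_sum key
    _ = Real.log M := by rw [← Finset.sum_mul, hsx, one_mul]
open Finset

/-- Variational inequality for a minimizer of the mirror-descent objective
over a segment, specialized to entropy regularization. -/
lemma vi_step {K : ℕ} (C : Finset (Fin K)) (c : ℝ) (ℓ pt ps q : Fin K → ℝ)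
    (hps : ∀ i ∈ C, 0 < ps i)
    (hmin : ∀ lam ∈ Set.Icc (0:ℝ) 1,
      (∑ i ∈ C, (ps i * ℓ i + c * (ps i * Real.log (ps i))
        - c * (Real.log (pt i) + 1) * ps i)) ≤
      ∑ i ∈ C, ((ps i + lam * (q i - ps i)) * ℓ i
        + c * ((ps i + lam * (q i - ps i)) * Real.log (ps i + lam * (q i - ps i)))
        - c * (Real.log (pt i) + 1) * (ps i + lam * (q i - ps i)))) :
    ∑ i ∈ C, (ps i - q i) * ℓ i
      ≤ c * ∑ i ∈ C, (q i - ps i) * (Real.log (ps i) - Real.log (pt i)) := by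
  set v : Fin K → ℝ := fun i => q i - ps i with hv
  set g : ℝ → ℝ := fun lam => ∑ i ∈ C, ((ps i + lam * v i) * ℓ i
        + c * ((ps i + lam * v i) * Real.log (ps i + lam * v i))
        - c * (Real.log (pt i) + 1) * (ps i + lam * v i)) with hg
  set d : ℝ := ∑ i ∈ C, (v i * ℓ i + c * ((Real.log (ps i) + 1) * v i)
        - c * (Real.log (pt i) + 1) * v i) with hd
  have hderiv : HasDerivAt g d 0 := by
    rw [hg, hd]
    apply HasDerivAt.fun_sum
    intro i hi
    have haff : HasDerivAt (fun lam : ℝ => ps i + lam * v i) (v i) 0 := by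
      simpa using ((hasDerivAt_id (0:ℝ)).mul_const (v i)).const_add (ps i)
    have h0 : ps i + (0:ℝ) * v i = ps i := by ring
    have hne : ps i + (0:ℝ) * v i ≠ 0 := by rw [h0]; exact (hps i hi).ne'
    have hmul : HasDerivAt (fun lam : ℝ => (ps i + lam * v i) * Real.log (ps i + lam * v i))
        ((Real.log (ps i + (0:ℝ) * v i) + 1) * v i) 0 :=
      ((Real.hasDerivAt_mul_log hne).comp 0 haff :)
    rw [h0] at hmul
    exact ((haff.mul_const (ℓ i)).add (hmul.const_mul c)).sub
      (haff.const_mul (c * (Real.log (pt i) + 1)))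
  have hd0 : 0 ≤ d := by
    have hW : HasDerivWithinAt g d (Set.Ioi (0:ℝ)) 0 := hderiv.hasDerivWithinAt
    rw [hasDerivWithinAt_iff_tendsto_slope] at hW
    have hsub : Set.Ioi (0:ℝ) \ {0} = Set.Ioi (0:ℝ) :=
      Set.diff_singleton_eq_self (by simp)
    rw [hsub] at hW
    refine ge_of_tendsto hW ?_
    filter_upwards [Ioc_mem_nhdsGT_of_mem (Set.left_mem_Ico.mpr one_pos)] with lam hlam
    have hlam0 : 0 < lam := hlam.1
    have hle : g 0 ≤ g lam := by
      have := hmin lam ⟨hlam0.le, hlam.2⟩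
      simpa [hg, hv] using this
    have hs : slope g 0 lam = (g lam - g 0) / lam := by
      rw [slope_def_field, sub_zero]
    rw [hs]
    exact div_nonneg (by linarith) hlam0.le
  have hdeq : d = ∑ i ∈ C, (q i - ps i) * ℓ i
      + c * ∑ i ∈ C, (q i - ps i) * (Real.log (ps i) - Real.log (pt i)) := by
    rw [hd, Finset.mul_sum, ← Finset.sum_add_distrib]
    apply Finset.sum_congr rfl
    intro i hi
    simp only [hv]
    ring
  have : ∑ i ∈ C, (ps i - q i) * ℓ i = - ∑ i ∈ C, (q i - ps i) * ℓ i := by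
    rw [← Finset.sum_neg_distrib]
    apply Finset.sum_congr rfl; intro i _; ring
  rw [this]
  rw [hdeq] at hd0
  linarith
open Finset


/-- One-step "local norm" bound for entropic mirror descent. -/
lemma quad_step {K : ℕ} (C : Finset (Fin K)) (η : ℝ) (hη : 0 < η) (ℓ pp x : Fin K → ℝ)
    (hpp : ∀ i ∈ C, 0 < pp i) (hx : ∀ i ∈ C, 0 < x i) (hl : ∀ i ∈ C, 0 ≤ ℓ i)
    (hsp : ∑ i ∈ C, pp i = 1) (hsx : ∑ i ∈ C, x i = 1) :
    ∑ i ∈ C, (pp i - x i) * ℓ i - (1/η) * ∑ i ∈ C, x i * Real.log (x i / pp i)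
      ≤ (η/2) * ∑ i ∈ C, pp i * ℓ i ^ 2 := by
  have key : ∀ i ∈ C, x i * (Real.log (pp i) - Real.log (x i) - η * ℓ i)
      ≤ pp i * Real.exp (-(η * ℓ i)) - x i := by
    intro i hi
    have hb : 0 < pp i * Real.exp (-(η * ℓ i)) / x i :=
      div_pos (mul_pos (hpp i hi) (Real.exp_pos _)) (hx i hi)
    have h2 := Real.log_le_sub_one_of_pos hb
    have h3 : Real.log (pp i * Real.exp (-(η * ℓ i)) / x i)
        = Real.log (pp i) - Real.log (x i) - η * ℓ i := by
      rw [Real.log_div (mul_pos (hpp i hi) (Real.exp_pos _)).ne' (hx i hi).ne',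
        Real.log_mul (hpp i hi).ne' (Real.exp_ne_zero _), Real.log_exp]
      ring
    rw [h3] at h2
    have h4 : x i * (Real.log (pp i) - Real.log (x i) - η * ℓ i)
        ≤ x i * (pp i * Real.exp (-(η * ℓ i)) / x i - 1) :=
      mul_le_mul_of_nonneg_left h2 (hx i hi).le
    have h5 : x i * (pp i * Real.exp (-(η * ℓ i)) / x i - 1)
        = pp i * Real.exp (-(η * ℓ i)) - x i := by
      have := (hx i hi).ne'
      field_simp
    linarith
  have hZ : ∑ i ∈ C, pp i * Real.exp (-(η * ℓ i))
      ≤ ∑ i ∈ C, pp i * (1 - η * ℓ i + (η * ℓ i) ^ 2 / 2) := by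
    apply Finset.sum_le_sum
    intro i hi
    exact mul_le_mul_of_nonneg_left
      (exp_neg_le_quad (mul_nonneg hη.le (hl i hi))) (hpp i hi).le
  have hsum := Finset.sum_le_sum key
  -- abbreviations
  have e1 : ∑ i ∈ C, x i * (Real.log (pp i) - Real.log (x i) - η * ℓ i)
      = - (∑ i ∈ C, x i * Real.log (x i / pp i)) - η * ∑ i ∈ C, x i * ℓ i := by
    rw [← Finset.sum_neg_distrib, Finset.mul_sum, ← Finset.sum_sub_distrib]
    apply Finset.sum_congr rfl
    intro i hi
    rw [Real.log_div (hx i hi).ne' (hpp i hi).ne']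
    ring
  have e2 : ∑ i ∈ C, (pp i * Real.exp (-(η * ℓ i)) - x i)
      = (∑ i ∈ C, pp i * Real.exp (-(η * ℓ i))) - 1 := by
    rw [Finset.sum_sub_distrib, hsx]
  have e3 : ∑ i ∈ C, pp i * (1 - η * ℓ i + (η * ℓ i) ^ 2 / 2)
      = 1 - η * ∑ i ∈ C, pp i * ℓ i + η ^ 2 / 2 * ∑ i ∈ C, pp i * ℓ i ^ 2 := by
    have hpt : ∀ i ∈ C, pp i * (1 - η * ℓ i + (η * ℓ i) ^ 2 / 2)
        = pp i - η * (pp i * ℓ i) + η ^ 2 / 2 * (pp i * ℓ i ^ 2) := by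
      intro i hi; ring
    rw [Finset.sum_congr rfl hpt, Finset.sum_add_distrib, Finset.sum_sub_distrib, hsp,
      ← Finset.mul_sum, ← Finset.mul_sum]
  have e4 : ∑ i ∈ C, (pp i - x i) * ℓ i
      = ∑ i ∈ C, pp i * ℓ i - ∑ i ∈ C, x i * ℓ i := by
    rw [← Finset.sum_sub_distrib]
    apply Finset.sum_congr rfl
    intro i hi
    ring
  rw [e1] at hsum
  rw [e2] at hsum
  rw [e4]
  have hfinal : η * ∑ i ∈ C, pp i * ℓ i - η * ∑ i ∈ C, x i * ℓ i
      - ∑ i ∈ C, x i * Real.log (x i / pp i) ≤ η ^ 2 / 2 * ∑ i ∈ C, pp i * ℓ i ^ 2 := by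
    have := hZ.trans_eq e3
    linarith
  have expand : ∑ i ∈ C, pp i * ℓ i - ∑ i ∈ C, x i * ℓ i
      - (1/η) * ∑ i ∈ C, x i * Real.log (x i / pp i)
      = (η * ∑ i ∈ C, pp i * ℓ i - η * ∑ i ∈ C, x i * ℓ i
        - ∑ i ∈ C, x i * Real.log (x i / pp i)) / η := by
    field_simp
  rw [expand, div_le_iff₀ hη]
  nlinarith [hfinal]
open Finset

/-- Telescoping sum with increasing coefficients. -/
lemma telescope_bound (c kq : ℕ → ℝ) (B : ℝ) :
    ∀ n, 1 ≤ n → (∀ t, 1 ≤ t → t ≤ n → kq t ≤ B) →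
      (∀ t, 1 ≤ t → t < n → c t ≤ c (t+1)) →
      (∀ t, 1 ≤ t → t ≤ n → 0 ≤ c t) →
      ∑ t ∈ Finset.Icc 1 n, c t * (kq t - kq (t+1)) ≤ c n * B - c n * kq (n+1) := by
  intro n
  induction n with
  | zero => intro h; omega
  | succ m ih =>
    intro _ hkq hmono hc
    by_cases hm : 1 ≤ m
    · rw [Finset.sum_Icc_succ_top (by omega : 1 ≤ m + 1)]
      have h1 := ih hm (fun t ht1 ht2 => hkq t ht1 (by omega))
        (fun t ht1 ht2 => hmono t ht1 (by omega)) (fun t ht1 ht2 => hc t ht1 (by omega))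
      have h2 : c m ≤ c (m+1) := hmono m hm (by omega)
      have h3 : kq (m+1) ≤ B := hkq (m+1) (by omega) (le_refl _)
      have h4 : 0 ≤ c m := hc m hm (by omega)
      nlinarith [mul_le_mul_of_nonneg_left h3 (by linarith : (0:ℝ) ≤ c (m+1) - c m)]
    · have hm0 : m = 0 := by omega
      subst hm0
      simp only [Finset.Icc_self, Finset.sum_singleton]
      have h3 : kq 1 ≤ B := hkq 1 (le_refl _) (le_refl _)
      have h4 : 0 ≤ c 1 := hc 1 (le_refl _) (le_refl _)
      nlinarith

/-- Adaptive step-size bound:  ∑ aₜ/√(1+Aₜ) ≤ 2(√(1+Aₙ) − 1).  -/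
lemma adaptive_bound (a : ℕ → ℝ) :
    ∀ n, (∀ t, 1 ≤ t → t ≤ n → 0 ≤ a t) →
      ∑ t ∈ Finset.Icc 1 n, a t / Real.sqrt (1 + ∑ τ ∈ Finset.Icc 1 t, a τ)
        ≤ 2 * (Real.sqrt (1 + ∑ τ ∈ Finset.Icc 1 n, a τ) - 1) := by
  intro n
  induction n with
  | zero => intro _; simp
  | succ m ih =>
    intro ha
    have ham : ∀ t, 1 ≤ t → t ≤ m → 0 ≤ a t := fun t h1 h2 => ha t h1 (by omega)
    have hAm : (0:ℝ) ≤ ∑ τ ∈ Finset.Icc 1 m, a τ :=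
      Finset.sum_nonneg fun τ hτ => ham τ (Finset.mem_Icc.mp hτ).1 (Finset.mem_Icc.mp hτ).2
    have hAm1 : (0:ℝ) ≤ ∑ τ ∈ Finset.Icc 1 (m+1), a τ :=
      Finset.sum_nonneg fun τ hτ => ha τ (Finset.mem_Icc.mp hτ).1 (Finset.mem_Icc.mp hτ).2
    rw [Finset.sum_Icc_succ_top (by omega : 1 ≤ m + 1)]
    have h1 := ih ham
    set u := Real.sqrt (1 + ∑ τ ∈ Finset.Icc 1 (m+1), a τ) with hu
    set v := Real.sqrt (1 + ∑ τ ∈ Finset.Icc 1 m, a τ) with hv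
    have hupos : 0 < u := Real.sqrt_pos.mpr (by linarith)
    have hvpos : 0 < v := Real.sqrt_pos.mpr (by linarith)
    have hu2 : u ^ 2 = 1 + ∑ τ ∈ Finset.Icc 1 (m+1), a τ := Real.sq_sqrt (by linarith)
    have hv2 : v ^ 2 = 1 + ∑ τ ∈ Finset.Icc 1 m, a τ := Real.sq_sqrt (by linarith)
    have hdiff : u ^ 2 - v ^ 2 = a (m+1) := by
      rw [hu2, hv2, Finset.sum_Icc_succ_top (by omega : 1 ≤ m + 1)]
      ring
    have hvu : v ≤ u := by
      apply Real.sqrt_le_sqrt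
      have := ha (m+1) (by omega) (le_refl _)
      rw [Finset.sum_Icc_succ_top (by omega : 1 ≤ m + 1)]
      linarith
    have hstep : a (m+1) / u ≤ 2 * (u - v) := by
      rw [div_le_iff₀ hupos]
      nlinarith [sq_nonneg (u - v)]
    calc _ ≤ 2 * (v - 1) + a (m+1) / u := by linarith
      _ ≤ 2 * (u - 1) := by linarith
open Finset


lemma hasFDerivAt_entropy {K : ℕ} (C : Finset (Fin K)) (c : ℝ) (y : Fin K → ℝ)
    (hy : ∀ i ∈ C, y i ≠ 0) :
    HasFDerivAt (fun q : Fin K → ℝ => c * ∑ i ∈ C, q i * Real.log (q i))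
      (∑ i ∈ C, (c * (Real.log (y i) + 1)) • (ContinuousLinearMap.proj i :
        (Fin K → ℝ) →L[ℝ] ℝ)) y := by
  have h1 : ∀ i ∈ C, HasFDerivAt (fun q : Fin K → ℝ => q i * Real.log (q i))
      ((Real.log (y i) + 1) • (ContinuousLinearMap.proj i : (Fin K → ℝ) →L[ℝ] ℝ)) y := by
    intro i hi
    have h0 : HasFDerivAt (fun q : Fin K → ℝ => q i)
        (ContinuousLinearMap.proj i : (Fin K → ℝ) →L[ℝ] ℝ) y :=
      hasFDerivAt_apply i y
    exact (Real.hasDerivAt_mul_log (hy i hi)).comp_hasFDerivAt y h0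
  have h2 : HasFDerivAt (fun q : Fin K → ℝ => ∑ i ∈ C, q i * Real.log (q i))
      (∑ i ∈ C, (Real.log (y i) + 1) • (ContinuousLinearMap.proj i :
        (Fin K → ℝ) →L[ℝ] ℝ)) y := HasFDerivAt.fun_sum h1
  have h3 := h2.const_mul c
  refine h3.congr_fderiv ?_
  rw [Finset.smul_sum]
  apply Finset.sum_congr rfl
  intro i hi
  rw [smul_smul]

lemma breg_entropy {K : ℕ} (C : Finset (Fin K)) (c : ℝ) (x y : Fin K → ℝ)
    (hy : ∀ i ∈ C, y i ≠ 0) :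
    breg (fun q : Fin K → ℝ => c * ∑ i ∈ C, q i * Real.log (q i)) x y
      = c * ∑ i ∈ C, x i * Real.log (x i) - c * ∑ i ∈ C, y i * Real.log (y i)
        - c * ∑ i ∈ C, (Real.log (y i) + 1) * (x i - y i) := by
  unfold breg
  rw [(hasFDerivAt_entropy C c y hy).fderiv]
  have : ((∑ i ∈ C, (c * (Real.log (y i) + 1)) • (ContinuousLinearMap.proj i :
      (Fin K → ℝ) →L[ℝ] ℝ)) (x - y)) = c * ∑ i ∈ C, (Real.log (y i) + 1) * (x i - y i) := by
    rw [ContinuousLinearMap.sum_apply, Finset.mul_sum]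
    apply Finset.sum_congr rfl
    intro i hi
    simp [ContinuousLinearMap.proj_apply]
    ring
  rw [this]
open Finset

/-- Three-point identity for relative entropies. -/
lemma three_point {K : ℕ} (C : Finset (Fin K)) (q a b : Fin K → ℝ)
    (hq : ∀ i ∈ C, 0 < q i) (ha : ∀ i ∈ C, 0 < a i) (hb : ∀ i ∈ C, 0 < b i) :
    ∑ i ∈ C, (q i - a i) * (Real.log (a i) - Real.log (b i))
      = ∑ i ∈ C, q i * Real.log (q i / b i) - ∑ i ∈ C, q i * Real.log (q i / a i)
        - ∑ i ∈ C, a i * Real.log (a i / b i) := by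
  rw [← Finset.sum_sub_distrib, ← Finset.sum_sub_distrib]
  apply Finset.sum_congr rfl
  intro i hi
  rw [Real.log_div (hq i hi).ne' (hb i hi).ne', Real.log_div (hq i hi).ne' (ha i hi).ne',
    Real.log_div (ha i hi).ne' (hb i hi).ne']
  ring

/-- Final self-bounding arithmetic. -/
lemma final_arith (R L ρ B ℒ : ℝ) (hL : 0 ≤ L) (hρ : 1 ≤ ρ) (hB0 : 0 ≤ B)
    (hBL : B ≤ ℒ) (hLd : (0.6931471803:ℝ) ≤ ℒ)
    (hR : R ≤ (B + 1) * Real.sqrt (1 + ρ * (R + L)) + ρ) :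
    R ≤ 25 * ρ * ℒ ^ 2 + 10 * ℒ * Real.sqrt (ρ * L) := by
  have hρ0 : (0:ℝ) < ρ := lt_of_lt_of_le one_pos hρ
  have hunn := Real.sqrt_nonneg (ρ * L)
  have hL0' : (0:ℝ) ≤ ℒ := le_trans (by norm_num) hLd
  rcases le_or_gt R 0 with hR0 | hRpos
  · nlinarith [mul_nonneg hρ0.le (mul_nonneg hL0' hL0'), mul_nonneg hL0' hunn]
  · have hu2 : Real.sqrt (ρ * L) ^ 2 = ρ * L := Real.sq_sqrt (mul_nonneg hρ0.le hL)
    have hs2 : Real.sqrt (ρ * R) ^ 2 = ρ * R := Real.sq_sqrt (mul_nonneg hρ0.le hRpos.le)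
    have hsnn := Real.sqrt_nonneg (ρ * R)
    set u := Real.sqrt (ρ * L) with hudef
    set s := Real.sqrt (ρ * R) with hsdef
    have hsq : Real.sqrt (1 + ρ * (R + L)) ≤ 1 + u + s := by
      have h1 : 1 + ρ * (R + L) ≤ (1 + u + s) ^ 2 := by
        nlinarith [mul_nonneg hunn hsnn]
      calc Real.sqrt (1 + ρ * (R + L)) ≤ Real.sqrt ((1 + u + s) ^ 2) := Real.sqrt_le_sqrt h1
        _ = 1 + u + s := Real.sqrt_sq (by positivity)
    have hR2 : R ≤ (B + 1) * (1 + u + s) + ρ := by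
      have := mul_le_mul_of_nonneg_left hsq (by linarith : (0:ℝ) ≤ B + 1)
      linarith
    have key : ρ * R ≤ ρ * (B + 1) * (1 + u + s) + ρ * ρ := by nlinarith [hR2]
    have amgm : 2 * (ρ * (B + 1)) * s ≤ s ^ 2 + (ρ * (B + 1)) ^ 2 := by
      nlinarith [sq_nonneg (s - ρ * (B + 1))]
    have step2 : s ^ 2 ≤ 2 * ρ * (B + 1) + 2 * ρ * (B + 1) * u + 2 * ρ ^ 2
        + ρ ^ 2 * (B + 1) ^ 2 := by nlinarith [key, amgm]
    have k1 : 2 * (B + 1) ≤ 10 * ℒ := by nlinarith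
    have k2 : 2 * (B + 1) + 2 + (B + 1) ^ 2 ≤ 25 * ℒ ^ 2 := by
      nlinarith [mul_le_mul_of_nonneg_left hBL hB0, sq_nonneg (ℒ - B),
        mul_nonneg (sub_nonneg.mpr hLd) (le_trans (by norm_num) hLd)]
    have h5 : ρ ^ 2 * (2 * (B + 1) + 2 + (B + 1) ^ 2) ≤ ρ ^ 2 * (25 * ℒ ^ 2) :=
      mul_le_mul_of_nonneg_left k2 (sq_nonneg ρ)
    have h6 : (ρ * u) * (2 * (B + 1)) ≤ (ρ * u) * (10 * ℒ) :=
      mul_le_mul_of_nonneg_left k1 (mul_nonneg hρ0.le hunn)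
    have h7 : 0 ≤ (ρ ^ 2 - ρ) * (B + 1) := by
      have h70 : (0:ℝ) ≤ ρ * (ρ - 1) := mul_nonneg hρ0.le (by linarith)
      exact mul_nonneg (by linarith only [h70]) (by linarith only [hB0])
    clear_value u s
    clear hR hsq hR2 key amgm hudef hsdef
    have main : s ^ 2 ≤ 25 * ρ ^ 2 * ℒ ^ 2 + 10 * ρ * ℒ * u := by
      have e5 : 2 * ρ * (B + 1) + 2 * ρ * (B + 1) * u + 2 * ρ ^ 2 + ρ ^ 2 * (B + 1) ^ 2
          ≤ 25 * ρ ^ 2 * ℒ ^ 2 + 10 * ρ * ℒ * u := by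
        ring_nf at h5 h6 h7 ⊢
        linarith only [h5, h6, h7]
      linarith only [step2, e5]
    have hfin : ρ * R ≤ ρ * (25 * ρ * ℒ ^ 2 + 10 * ℒ * u) := by
      ring_nf at main hs2 ⊢
      linarith only [main, hs2]
    exact le_of_mul_le_mul_left (by linarith) hρ0

set_option maxHeartbeats 1000000

/-- Regret guarantee for Hedge with adaptive learning rates (Lemma 4 /
Algorithm 3 of the paper) over an active set `C` of experts. -/
theorem stmt8 (K T : ℕ) (hK : 2 ≤ K) (hT : 1 ≤ T)
    (C : Finset (Fin K)) (hC : C.Nonempty)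
    (Ω : Set (Fin K → ℝ))
    (hΩ : Ω = {p | p ∈ stdSimplex ℝ (Fin K) ∧
      (∀ i ∈ C, 1 / ((C.card : ℝ) * T) ≤ p i) ∧ ∀ i ∉ C, p i = 0})
    (p ℓ : ℕ → Fin K → ℝ) (η : ℕ → ℝ) (ψ : ℕ → (Fin K → ℝ) → ℝ)
    (hp1 : ∀ i, p 1 i = if i ∈ C then ((C.card : ℝ))⁻¹ else 0)
    (hℓ0 : ∀ t ∈ Finset.Icc 1 T, ∀ i, 0 ≤ ℓ t i)
    (hη : ∀ t, η t = 1 / Real.sqrt (1 + ∑ τ ∈ Finset.Icc 1 t, ∑ i, p τ i * ℓ τ i ^ 2))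
    (hψ : ∀ t, ψ t = fun q => (1 / η t) * ∑ i ∈ C, q i * Real.log (q i))
    (hupd : ∀ t ∈ Finset.Icc 1 T, p (t + 1) ∈ Ω ∧ ∀ q ∈ Ω,
      (∑ i, p (t + 1) i * ℓ t i) + breg (ψ t) (p (t + 1)) (p t)
        ≤ (∑ i, q i * ℓ t i) + breg (ψ t) q (p t))
    (ρ : ℝ)
    (hρ : ρ = max 1 (sSup {x : ℝ | ∃ t ∈ Finset.Icc 1 T, ∃ i ∈ C, x = ℓ t i})) :
    ∀ i ∈ C,
      ∑ t ∈ Finset.Icc 1 T, (∑ j, p t j * ℓ t j - ℓ t i) ≤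
        25 * ρ * Real.log ((K : ℝ) * T) ^ 2
          + 10 * Real.log ((K : ℝ) * T) *
            Real.sqrt (ρ * ∑ t ∈ Finset.Icc 1 T, ℓ t i) := by
  intro i hi
  have hcard : 0 < C.card := Finset.card_pos.mpr hC
  have hcpos : (0:ℝ) < (C.card : ℝ) := by exact_mod_cast hcard
  have hT1 : (1:ℝ) ≤ (T:ℝ) := by exact_mod_cast hT
  have hTpos : (0:ℝ) < (T:ℝ) := by linarith
  have hM : (0:ℝ) < (C.card : ℝ) * T := by positivity
  have hcK : (C.card : ℝ) ≤ (K:ℝ) := by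
    have h2 : C.card ≤ K := by simpa using Finset.card_le_univ C
    exact_mod_cast h2
  -- membership facts
  have hmem : ∀ t, 1 ≤ t → t ≤ T + 1 →
      (∀ j, 0 ≤ p t j) ∧ (∑ j ∈ C, p t j = 1) ∧
      (∀ j ∈ C, 1 / ((C.card : ℝ) * T) ≤ p t j) ∧ (∀ j ∉ C, p t j = 0) := by
    intro t h1 h2
    have key : p t ∈ stdSimplex ℝ (Fin K) ∧ (∀ j ∈ C, 1 / ((C.card : ℝ) * T) ≤ p t j)
        ∧ ∀ j ∉ C, p t j = 0 := by
      rcases eq_or_lt_of_le h1 with h | h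
      · -- t = 1
        rw [← h]
        refine ⟨⟨fun j => ?_, ?_⟩, fun j hj => ?_, fun j hj => ?_⟩
        · rw [hp1]; split
          · positivity
          · exact le_refl 0
        · simp only [hp1]
          rw [Finset.sum_ite_mem, Finset.univ_inter, Finset.sum_const, nsmul_eq_mul]
          exact mul_inv_cancel₀ hcpos.ne'
        · rw [hp1, if_pos hj, ← one_div]
          exact one_div_le_one_div_of_le hcpos (le_mul_of_one_le_right hcpos.le hT1)
        · rw [hp1, if_neg hj]
      · obtain ⟨s, rfl⟩ : ∃ s, t = s + 1 := ⟨t - 1, by omega⟩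
        have hs : s ∈ Finset.Icc 1 T := Finset.mem_Icc.mpr ⟨by omega, by omega⟩
        have h3 := (hupd s hs).1
        rw [hΩ] at h3
        exact h3
    obtain ⟨⟨hstd1, hstd2⟩, hlb, hz⟩ := key
    refine ⟨hstd1, ?_, hlb, hz⟩
    rw [Finset.sum_subset (Finset.subset_univ C) (fun j _ hj => hz j hj)]
    exact hstd2
  have hppos : ∀ t, 1 ≤ t → t ≤ T + 1 → ∀ j ∈ C, 0 < p t j := fun t h1 h2 j hj =>
    lt_of_lt_of_le (div_pos one_pos hM) ((hmem t h1 h2).2.2.1 j hj)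
  have hpsumU : ∀ t, 1 ≤ t → t ≤ T + 1 → ∑ j, p t j = 1 := by
    intro t h1 h2
    rw [← Finset.sum_subset (Finset.subset_univ C) (fun j _ hj => (hmem t h1 h2).2.2.2 j hj)]
    exact (hmem t h1 h2).2.1
  -- η facts
  have hA0 : ∀ t, t ≤ T → (0:ℝ) ≤ ∑ τ ∈ Finset.Icc 1 t, ∑ j, p τ j * ℓ τ j ^ 2 := by
    intro t ht
    apply Finset.sum_nonneg; intro τ hτ
    have hτ' := Finset.mem_Icc.mp hτ
    apply Finset.sum_nonneg; intro j _
    exact mul_nonneg ((hmem τ hτ'.1 (by omega)).1 j) (sq_nonneg _)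
  have hsq1 : ∀ t, t ≤ T →
      1 ≤ Real.sqrt (1 + ∑ τ ∈ Finset.Icc 1 t, ∑ j, p τ j * ℓ τ j ^ 2) := by
    intro t ht
    have h := Real.sqrt_le_sqrt (show (1:ℝ) ≤ 1 + ∑ τ ∈ Finset.Icc 1 t, ∑ j, p τ j * ℓ τ j ^ 2
      by linarith [hA0 t ht])
    rwa [Real.sqrt_one] at h
  have hηpos : ∀ t, t ≤ T → 0 < η t := by
    intro t ht; rw [hη]; exact div_pos one_pos (by linarith [hsq1 t ht])
  have hηinv : ∀ t, 1 / η t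
      = Real.sqrt (1 + ∑ τ ∈ Finset.Icc 1 t, ∑ j, p τ j * ℓ τ j ^ 2) := by
    intro t; rw [hη, one_div_one_div]
  -- ρ facts
  have hρ1 : 1 ≤ ρ := by rw [hρ]; exact le_max_left _ _
  have hρl : ∀ t, 1 ≤ t → t ≤ T → ∀ j ∈ C, ℓ t j ≤ ρ := by
    intro t h1 h2 j hj
    have hfin : {x : ℝ | ∃ t ∈ Finset.Icc 1 T, ∃ i ∈ C, x = ℓ t i}.Finite := by
      have he : {x : ℝ | ∃ t ∈ Finset.Icc 1 T, ∃ i ∈ C, x = ℓ t i}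
          = ↑((Finset.Icc 1 T ×ˢ C).image (fun pr => ℓ pr.1 pr.2)) := by
        ext x
        simp only [Finset.coe_image, Set.mem_image, Finset.mem_coe, Finset.mem_product,
          Set.mem_setOf_eq]
        constructor
        · rintro ⟨t, ht, j, hj, rfl⟩; exact ⟨(t, j), ⟨ht, hj⟩, rfl⟩
        · rintro ⟨⟨t, j⟩, ⟨ht, hj⟩, rfl⟩; exact ⟨t, ht, j, hj, rfl⟩
      rw [he]; exact Finset.finite_toSet _
    have hmem' : ℓ t j ∈ {x : ℝ | ∃ t ∈ Finset.Icc 1 T, ∃ i ∈ C, x = ℓ t i} :=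
      ⟨t, Finset.mem_Icc.mpr ⟨h1, h2⟩, j, hj, rfl⟩
    have hle := le_csSup hfin.bddAbove hmem'
    rw [hρ]; exact le_trans hle (le_max_right _ _)
  -- comparator
  set q0 : Fin K → ℝ := fun j => (if j = i then 1 - 1/(T:ℝ) else 0)
    + (if j ∈ C then 1/((C.card:ℝ)*(T:ℝ)) else 0) with hq0def
  have hq0nn : ∀ j, 0 ≤ q0 j := by
    intro j; simp only [hq0def]
    have h1 : (0:ℝ) ≤ 1 - 1/(T:ℝ) := by
      rw [sub_nonneg, div_le_one hTpos]; exact hT1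
    have h2 : (0:ℝ) ≤ 1/((C.card:ℝ)*(T:ℝ)) := by positivity
    split <;> split <;> linarith
  have hq0zero : ∀ j ∉ C, q0 j = 0 := by
    intro j hj; simp only [hq0def]
    rw [if_neg (fun h : j = i => hj (h ▸ hi)), if_neg hj, add_zero]
  have hq0sumU : ∑ j, q0 j = 1 := by
    simp only [hq0def]
    rw [Finset.sum_add_distrib]
    rw [Finset.sum_ite_eq' Finset.univ i (fun _ => 1 - 1/(T:ℝ))]
    rw [Finset.sum_ite_mem, Finset.univ_inter, Finset.sum_const, nsmul_eq_mul]
    rw [if_pos (Finset.mem_univ i)]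
    field_simp
    ring
  have hq0sum : ∑ j ∈ C, q0 j = 1 := by
    rw [Finset.sum_subset (Finset.subset_univ C) (fun j _ hj => hq0zero j hj)]
    exact hq0sumU
  have hq0lb : ∀ j ∈ C, 1/((C.card:ℝ)*T) ≤ q0 j := by
    intro j hj; simp only [hq0def]
    rw [if_pos hj]
    have h1 : (0:ℝ) ≤ 1 - 1/(T:ℝ) := by
      rw [sub_nonneg, div_le_one hTpos]; exact hT1
    split
    · linarith
    · linarith
  have hq0pos : ∀ j ∈ C, 0 < q0 j := fun j hj =>
    lt_of_lt_of_le (div_pos one_pos hM) (hq0lb j hj)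
  have hq0le1 : ∀ j ∈ C, q0 j ≤ 1 := by
    intro j hj
    have := Finset.single_le_sum (f := q0) (fun k _ => hq0nn k) hj
    rwa [hq0sum] at this
  have hq0mem : q0 ∈ Ω := by
    rw [hΩ]; exact ⟨⟨hq0nn, hq0sumU⟩, hq0lb, hq0zero⟩
  -- relative entropy bounds
  have hklqB : ∀ t, 1 ≤ t → t ≤ T + 1 →
      ∑ j ∈ C, q0 j * Real.log (q0 j / p t j) ≤ Real.log ((C.card:ℝ) * T) :=
    fun t h1 h2 => kl_le_log C q0 (p t) _ hM hq0pos hq0le1 ((hmem t h1 h2).2.2.1) hq0sum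
  have hklq0 : 0 ≤ ∑ j ∈ C, q0 j * Real.log (q0 j / p (T+1) j) :=
    kl_nonneg C q0 (p (T+1)) hq0pos (hppos (T+1) (by omega) (le_refl _)) hq0sum
      (hmem (T+1) (by omega) (le_refl _)).2.1
  -- the per-round inequality
  have hstep : ∀ t, 1 ≤ t → t ≤ T →
      ∑ j ∈ C, (p t j - q0 j) * ℓ t j
        ≤ (1/η t) * ((∑ j ∈ C, q0 j * Real.log (q0 j / p t j))
            - ∑ j ∈ C, q0 j * Real.log (q0 j / p (t+1) j))
          + (η t / 2) * ∑ j ∈ C, p t j * ℓ t j ^ 2 := by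
    intro t h1 h2
    have htmem : t ∈ Finset.Icc 1 T := Finset.mem_Icc.mpr ⟨h1, h2⟩
    have hηt : 0 < η t := hηpos t h2
    have hptpos : ∀ j ∈ C, 0 < p t j := hppos t h1 (by omega)
    have hpnpos : ∀ j ∈ C, 0 < p (t+1) j := hppos (t+1) (by omega) (by omega)
    have hptsum : ∑ j ∈ C, p t j = 1 := (hmem t h1 (by omega)).2.1
    have hpnsum : ∑ j ∈ C, p (t+1) j = 1 := (hmem (t+1) (by omega) (by omega)).2.1
    have hpnzero : ∀ j ∉ C, p (t+1) j = 0 := (hmem (t+1) (by omega) (by omega)).2.2.2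
    have hpnlb : ∀ j ∈ C, 1/((C.card:ℝ)*T) ≤ p (t+1) j :=
      (hmem (t+1) (by omega) (by omega)).2.2.1
    have hpnsumU : ∑ j, p (t+1) j = 1 := hpsumU (t+1) (by omega) (by omega)
    have hlnn : ∀ j, 0 ≤ ℓ t j := hℓ0 t htmem
    have hbregeq : ∀ x : Fin K → ℝ, breg (ψ t) x (p t)
        = (1/η t) * ∑ j ∈ C, x j * Real.log (x j)
          - (1/η t) * ∑ j ∈ C, p t j * Real.log (p t j)
          - (1/η t) * ∑ j ∈ C, (Real.log (p t j) + 1) * (x j - p t j) := by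
      intro x
      rw [hψ t]
      exact breg_entropy C (1/η t) x (p t) (fun j hj => (hptpos j hj).ne')
    have hGconv : ∀ x : Fin K → ℝ, (∀ j ∉ C, x j = 0) →
        (∑ j, x j * ℓ t j) + breg (ψ t) x (p t)
          = (∑ j ∈ C, (x j * ℓ t j + (1/η t) * (x j * Real.log (x j))
              - (1/η t) * (Real.log (p t j) + 1) * x j))
            + ((1/η t) * ∑ j ∈ C, (Real.log (p t j) + 1) * p t j
              - (1/η t) * ∑ j ∈ C, p t j * Real.log (p t j)) := by
      intro x hx
      rw [hbregeq x]
      rw [← Finset.sum_subset (Finset.subset_univ C)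
        (fun j _ hj => by rw [hx j hj, zero_mul])]
      have hL : (∑ j ∈ C, x j * ℓ t j)
          + ((1/η t) * ∑ j ∈ C, x j * Real.log (x j)
            - (1/η t) * ∑ j ∈ C, p t j * Real.log (p t j)
            - (1/η t) * ∑ j ∈ C, (Real.log (p t j) + 1) * (x j - p t j))
          = ∑ j ∈ C, (x j * ℓ t j + ((1/η t) * (x j * Real.log (x j))
              - (1/η t) * (p t j * Real.log (p t j))
              - (1/η t) * ((Real.log (p t j) + 1) * (x j - p t j)))) := by
        rw [Finset.mul_sum, Finset.mul_sum, Finset.mul_sum, ← Finset.sum_sub_distrib,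
          ← Finset.sum_sub_distrib, ← Finset.sum_add_distrib]
      have hR : (∑ j ∈ C, (x j * ℓ t j + (1/η t) * (x j * Real.log (x j))
              - (1/η t) * (Real.log (p t j) + 1) * x j))
            + ((1/η t) * ∑ j ∈ C, (Real.log (p t j) + 1) * p t j
              - (1/η t) * ∑ j ∈ C, p t j * Real.log (p t j))
          = ∑ j ∈ C, ((x j * ℓ t j + (1/η t) * (x j * Real.log (x j))
              - (1/η t) * (Real.log (p t j) + 1) * x j)
              + ((1/η t) * ((Real.log (p t j) + 1) * p t j)
                - (1/η t) * (p t j * Real.log (p t j)))) := by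
        rw [Finset.mul_sum, Finset.mul_sum, ← Finset.sum_sub_distrib, ← Finset.sum_add_distrib]
      rw [hL, hR]
      exact Finset.sum_congr rfl (fun j _ => by ring)
    have hFmin : ∀ lam ∈ Set.Icc (0:ℝ) 1,
        (∑ j ∈ C, (p (t+1) j * ℓ t j + (1/η t) * (p (t+1) j * Real.log (p (t+1) j))
          - (1/η t) * (Real.log (p t j) + 1) * p (t+1) j)) ≤
        ∑ j ∈ C, ((p (t+1) j + lam * (q0 j - p (t+1) j)) * ℓ t j
          + (1/η t) * ((p (t+1) j + lam * (q0 j - p (t+1) j))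
              * Real.log (p (t+1) j + lam * (q0 j - p (t+1) j)))
          - (1/η t) * (Real.log (p t j) + 1) * (p (t+1) j + lam * (q0 j - p (t+1) j))) := by
      intro lam hlam
      have hl1 : (0:ℝ) ≤ 1 - lam := by linarith [hlam.2]
      have hl2 : (0:ℝ) ≤ lam := hlam.1
      set qlam : Fin K → ℝ := fun j => p (t+1) j + lam * (q0 j - p (t+1) j) with hqlamdef
      have hcomb : ∀ j, qlam j = (1 - lam) * p (t+1) j + lam * q0 j := by
        intro j; simp only [hqlamdef]; ring
      have hql0 : ∀ j ∉ C, qlam j = 0 := by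
        intro j hj; rw [hcomb, hpnzero j hj, hq0zero j hj]; ring
      have hqlammem : qlam ∈ Ω := by
        rw [hΩ]
        refine ⟨⟨fun j => ?_, ?_⟩, fun j hj => ?_, hql0⟩
        · rw [hcomb]
          have ha := (hmem (t+1) (by omega) (by omega)).1 j
          have hb := hq0nn j
          nlinarith
        · calc ∑ j, qlam j = ∑ j, ((1 - lam) * p (t+1) j + lam * q0 j) := by
                apply Finset.sum_congr rfl; intro j _; rw [hcomb]
            _ = (1 - lam) * ∑ j, p (t+1) j + lam * ∑ j, q0 j := by
                rw [Finset.sum_add_distrib, Finset.mul_sum, Finset.mul_sum]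
            _ = 1 := by rw [hpnsumU, hq0sumU]; ring
        · rw [hcomb]
          have ha := hpnlb j hj
          have hb := hq0lb j hj
          nlinarith
      have hin := (hupd t htmem).2 qlam hqlammem
      rw [hGconv (p (t+1)) hpnzero, hGconv qlam hql0] at hin
      simp only [hqlamdef] at hin
      linarith [hin]
    have h1' := vi_step C (1/η t) (ℓ t) (p t) (p (t+1)) q0 hpnpos hFmin
    have h3p := three_point C q0 (p (t+1)) (p t) hq0pos hpnpos hptpos
    rw [h3p] at h1'
    have h2' := quad_step C (η t) hηt (ℓ t) (p t) (p (t+1)) hptpos hpnpos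
      (fun j _ => hlnn j) hptsum hpnsum
    have hsplitsum : ∑ j ∈ C, (p t j - q0 j) * ℓ t j
        = ∑ j ∈ C, (p t j - p (t+1) j) * ℓ t j + ∑ j ∈ C, (p (t+1) j - q0 j) * ℓ t j := by
      rw [← Finset.sum_add_distrib]
      apply Finset.sum_congr rfl; intro j _; ring
    rw [hsplitsum]
    have hexp : (1/η t) * ((∑ j ∈ C, q0 j * Real.log (q0 j / p t j))
          - ∑ j ∈ C, q0 j * Real.log (q0 j / p (t+1) j)
          - ∑ j ∈ C, p (t+1) j * Real.log (p (t+1) j / p t j))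
        = (1/η t) * ((∑ j ∈ C, q0 j * Real.log (q0 j / p t j))
          - ∑ j ∈ C, q0 j * Real.log (q0 j / p (t+1) j))
          - (1/η t) * ∑ j ∈ C, p (t+1) j * Real.log (p (t+1) j / p t j) := by ring
    rw [hexp] at h1'
    linarith [h1', h2']
  have hsum1 : ∑ t ∈ Finset.Icc 1 T, ∑ j ∈ C, (p t j - q0 j) * ℓ t j
      ≤ (∑ t ∈ Finset.Icc 1 T, (1/η t) * ((∑ j ∈ C, q0 j * Real.log (q0 j / p t j))
          - ∑ j ∈ C, q0 j * Real.log (q0 j / p (t+1) j)))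
        + ∑ t ∈ Finset.Icc 1 T, (η t / 2) * ∑ j ∈ C, p t j * ℓ t j ^ 2 := by
    rw [← Finset.sum_add_distrib]
    apply Finset.sum_le_sum
    intro t ht
    exact hstep t (Finset.mem_Icc.mp ht).1 (Finset.mem_Icc.mp ht).2
  have htele : (∑ t ∈ Finset.Icc 1 T, (1/η t) * ((∑ j ∈ C, q0 j * Real.log (q0 j / p t j))
          - ∑ j ∈ C, q0 j * Real.log (q0 j / p (t+1) j)))
      ≤ Real.sqrt (1 + ∑ τ ∈ Finset.Icc 1 T, ∑ j, p τ j * ℓ τ j ^ 2)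
        * Real.log ((C.card:ℝ)*T) := by
    have hmono : ∀ t, 1 ≤ t → t < T →
        Real.sqrt (1 + ∑ τ ∈ Finset.Icc 1 t, ∑ j, p τ j * ℓ τ j ^ 2)
          ≤ Real.sqrt (1 + ∑ τ ∈ Finset.Icc 1 (t+1), ∑ j, p τ j * ℓ τ j ^ 2) := by
      intro t ht1 ht2
      apply Real.sqrt_le_sqrt
      rw [Finset.sum_Icc_succ_top (by omega : 1 ≤ t + 1)]
      have hnn : (0:ℝ) ≤ ∑ j, p (t+1) j * ℓ (t+1) j ^ 2 :=
        Finset.sum_nonneg (fun j _ =>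
          mul_nonneg ((hmem (t+1) (by omega) (by omega)).1 j) (sq_nonneg _))
      linarith
    have hkey := telescope_bound
      (fun t => Real.sqrt (1 + ∑ τ ∈ Finset.Icc 1 t, ∑ j, p τ j * ℓ τ j ^ 2))
      (fun t => ∑ j ∈ C, q0 j * Real.log (q0 j / p t j))
      (Real.log ((C.card:ℝ)*T)) T hT
      (fun t ht1 ht2 => hklqB t ht1 (by omega))
      (fun t ht1 ht2 => hmono t ht1 ht2)
      (fun t ht1 ht2 => Real.sqrt_nonneg _)
    have hrw : ∀ t ∈ Finset.Icc 1 T,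
        (1/η t) * ((∑ j ∈ C, q0 j * Real.log (q0 j / p t j))
          - ∑ j ∈ C, q0 j * Real.log (q0 j / p (t+1) j))
        = Real.sqrt (1 + ∑ τ ∈ Finset.Icc 1 t, ∑ j, p τ j * ℓ τ j ^ 2)
          * ((∑ j ∈ C, q0 j * Real.log (q0 j / p t j))
            - ∑ j ∈ C, q0 j * Real.log (q0 j / p (t+1) j)) := by
      intro t ht; rw [hηinv t]
    rw [Finset.sum_congr rfl hrw]
    have hpos := mul_nonneg (Real.sqrt_nonneg
      (1 + ∑ τ ∈ Finset.Icc 1 T, ∑ j, p τ j * ℓ τ j ^ 2)) hklq0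
    linarith [hkey]
  have hquad : ∑ t ∈ Finset.Icc 1 T, (η t / 2) * ∑ j ∈ C, p t j * ℓ t j ^ 2
      ≤ Real.sqrt (1 + ∑ τ ∈ Finset.Icc 1 T, ∑ j, p τ j * ℓ τ j ^ 2) - 1 := by
    have hrw : ∀ t ∈ Finset.Icc 1 T, (η t / 2) * ∑ j ∈ C, p t j * ℓ t j ^ 2
        = ((∑ j, p t j * ℓ t j ^ 2)
            / Real.sqrt (1 + ∑ τ ∈ Finset.Icc 1 t, ∑ j, p τ j * ℓ τ j ^ 2)) / 2 := by
      intro t ht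
      obtain ⟨ht1, ht2⟩ := Finset.mem_Icc.mp ht
      have hQ : ∑ j ∈ C, p t j * ℓ t j ^ 2 = ∑ j, p t j * ℓ t j ^ 2 :=
        Finset.sum_subset (Finset.subset_univ C) (fun j _ hj => by
          rw [(hmem t ht1 (by omega)).2.2.2 j hj, zero_mul])
      rw [hQ, hη t]; ring
    rw [Finset.sum_congr rfl hrw, ← Finset.sum_div]
    have had := adaptive_bound (fun t => ∑ j, p t j * ℓ t j ^ 2) T
      (fun t h1t h2t => Finset.sum_nonneg (fun j _ =>
        mul_nonneg ((hmem t h1t (by omega)).1 j) (sq_nonneg _)))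
    linarith [had]
  have hq0loss : ∀ t, 1 ≤ t → t ≤ T → ∑ j ∈ C, q0 j * ℓ t j ≤ ℓ t i + ρ / T := by
    intro t h1 h2
    have hsplit : ∑ j ∈ C, q0 j * ℓ t j
        = ∑ j ∈ C, (if j = i then (1 - 1/(T:ℝ)) * ℓ t j else 0)
          + ∑ j ∈ C, (1/((C.card:ℝ)*T)) * ℓ t j := by
      rw [← Finset.sum_add_distrib]
      apply Finset.sum_congr rfl
      intro j hj
      simp only [hq0def]
      rw [if_pos hj]
      split <;> ring
    have hfirst : ∑ j ∈ C, (if j = i then (1 - 1/(T:ℝ)) * ℓ t j else 0)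
        = (1 - 1/(T:ℝ)) * ℓ t i := by
      rw [Finset.sum_ite_eq' C i (fun j => (1 - 1/(T:ℝ)) * ℓ t j), if_pos hi]
    have hsecond : (∑ j ∈ C, (1/((C.card:ℝ)*T)) * ℓ t j) ≤ ρ / T := by
      rw [← Finset.mul_sum]
      have hlsum : ∑ j ∈ C, ℓ t j ≤ (C.card:ℝ) * ρ := by
        have hss := Finset.sum_le_card_nsmul C (ℓ t) ρ (fun j hj => hρl t h1 h2 j hj)
        simpa [nsmul_eq_mul] using hss
      have h3 : (1/((C.card:ℝ)*T)) * ((C.card:ℝ) * ρ) = ρ / T := by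
        field_simp
      calc (1/((C.card:ℝ)*T)) * ∑ j ∈ C, ℓ t j
          ≤ (1/((C.card:ℝ)*T)) * ((C.card:ℝ)*ρ) :=
            mul_le_mul_of_nonneg_left hlsum (by positivity)
        _ = ρ / T := h3
    have h4 := hℓ0 t (Finset.mem_Icc.mpr ⟨h1, h2⟩) i
    have h5 : 0 ≤ (1/(T:ℝ)) * ℓ t i := mul_nonneg (by positivity) h4
    have h6 : (1 - 1/(T:ℝ)) * ℓ t i = ℓ t i - (1/(T:ℝ)) * ℓ t i := by ring
    rw [hsplit, hfirst]
    linarith only [hsecond, h4, h5, h6]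
  have hsumsub : ∑ t ∈ Finset.Icc 1 T, ∑ j ∈ C, (p t j - q0 j) * ℓ t j
      = (∑ t ∈ Finset.Icc 1 T, ∑ j ∈ C, p t j * ℓ t j)
        - ∑ t ∈ Finset.Icc 1 T, ∑ j ∈ C, q0 j * ℓ t j := by
    rw [← Finset.sum_sub_distrib]
    apply Finset.sum_congr rfl
    intro t _
    rw [← Finset.sum_sub_distrib]
    apply Finset.sum_congr rfl
    intro j _
    ring
  have hq0totalsum : ∑ t ∈ Finset.Icc 1 T, ∑ j ∈ C, q0 j * ℓ t j
      ≤ (∑ t ∈ Finset.Icc 1 T, ℓ t i) + ρ := by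
    calc ∑ t ∈ Finset.Icc 1 T, ∑ j ∈ C, q0 j * ℓ t j
        ≤ ∑ t ∈ Finset.Icc 1 T, (ℓ t i + ρ / T) := Finset.sum_le_sum (fun t ht =>
            hq0loss t (Finset.mem_Icc.mp ht).1 (Finset.mem_Icc.mp ht).2)
      _ = (∑ t ∈ Finset.Icc 1 T, ℓ t i) + ρ := by
          rw [Finset.sum_add_distrib, Finset.sum_const, Nat.card_Icc]
          simp only [Nat.add_sub_cancel]
          rw [nsmul_eq_mul]
          field_simp
  have hATS : (∑ τ ∈ Finset.Icc 1 T, ∑ j, p τ j * ℓ τ j ^ 2)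
      ≤ ρ * ∑ t ∈ Finset.Icc 1 T, ∑ j ∈ C, p t j * ℓ t j := by
    rw [Finset.mul_sum]
    apply Finset.sum_le_sum
    intro t ht
    obtain ⟨h1, h2⟩ := Finset.mem_Icc.mp ht
    have hQ : ∑ j, p t j * ℓ t j ^ 2 = ∑ j ∈ C, p t j * ℓ t j ^ 2 :=
      (Finset.sum_subset (Finset.subset_univ C) (fun j _ hj => by
        rw [(hmem t h1 (by omega)).2.2.2 j hj, zero_mul])).symm
    rw [hQ, Finset.mul_sum]
    apply Finset.sum_le_sum
    intro j hj
    have hp := (hmem t h1 (by omega)).1 j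
    have hl := hℓ0 t ht j
    have hb := hρl t h1 h2 j hj
    calc p t j * ℓ t j ^ 2 = (p t j * ℓ t j) * ℓ t j := by ring
      _ ≤ (p t j * ℓ t j) * ρ := mul_le_mul_of_nonneg_left hb (mul_nonneg hp hl)
      _ = ρ * (p t j * ℓ t j) := by ring
  set W := Real.sqrt (1 + ∑ τ ∈ Finset.Icc 1 T, ∑ j, p τ j * ℓ τ j ^ 2) with hWdef
  set S := ∑ t ∈ Finset.Icc 1 T, ∑ j ∈ C, p t j * ℓ t j with hSdef
  set L := ∑ t ∈ Finset.Icc 1 T, ℓ t i with hLdef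
  have hWnn : 0 ≤ W := Real.sqrt_nonneg _
  have hc1 : (1:ℝ) ≤ (C.card:ℝ) := by exact_mod_cast hcard
  have hBnn : 0 ≤ Real.log ((C.card:ℝ)*T) := Real.log_nonneg (by nlinarith [hc1, hT1])
  rw [hsumsub] at hsum1
  have hRS : S - L ≤ (Real.log ((C.card:ℝ)*T) + 1) * W + ρ := by
    nlinarith [hsum1, htele, hquad, hq0totalsum]
  have hWS : W ≤ Real.sqrt (1 + ρ * ((S - L) + L)) := by
    rw [hWdef]
    apply Real.sqrt_le_sqrt
    have he : ρ * ((S - L) + L) = ρ * S := by ring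
    rw [he]
    linarith [hATS]
  have hfinalhyp : S - L ≤ (Real.log ((C.card:ℝ)*T) + 1)
      * Real.sqrt (1 + ρ * ((S - L) + L)) + ρ := by
    have hmul := mul_le_mul_of_nonneg_left hWS
      (by linarith : (0:ℝ) ≤ Real.log ((C.card:ℝ)*T) + 1)
    linarith [hRS]
  have hBL : Real.log ((C.card:ℝ)*T) ≤ Real.log ((K:ℝ)*T) :=
    Real.log_le_log hM (mul_le_mul_of_nonneg_right hcK hTpos.le)
  have hLd : (0.6931471803:ℝ) ≤ Real.log ((K:ℝ)*T) := by
    have hK2 : (2:ℝ) ≤ (K:ℝ) := by exact_mod_cast hK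
    have h2 : (2:ℝ) ≤ (K:ℝ)*T := by nlinarith
    have h3 := Real.log_le_log (by norm_num) h2
    linarith [Real.log_two_gt_d9]
  have hLnn : 0 ≤ L := Finset.sum_nonneg fun t ht => hℓ0 t ht i
  have hfin := final_arith (S - L) L ρ (Real.log ((C.card:ℝ)*T)) (Real.log ((K:ℝ)*T))
    hLnn hρ1 hBnn hBL hLd hfinalhyp
  have hLHSeq : ∑ t ∈ Finset.Icc 1 T, (∑ j, p t j * ℓ t j - ℓ t i) = S - L := by
    rw [hSdef, hLdef, Finset.sum_sub_distrib]
    congr 1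
    apply Finset.sum_congr rfl
    intro t ht
    obtain ⟨h1, h2⟩ := Finset.mem_Icc.mp ht
    exact (Finset.sum_subset (Finset.subset_univ C) (fun j _ hj => by
      rw [(hmem t h1 (by omega)).2.2.2 j hj, zero_mul])).symm
  rw [hLHSeq]
  exact hfin
end

section
/- Fix K ≥ 1, a subset S ⊆ [K] with complement S̄ = [K]\S, reals η with 0 < η ≤ 1/5 and η̄ > 0, and a convex set Ω ⊆ Δ(K) all of whose elements have strictly positive coordinates. Let ψ(p) = (1/η)·Σ_{i∈S} ln(1/p_i) + (1/η̄)·Σ_{i∈S̄} p_i ln p_i. Let p_t ∈ Ω, let ℓ̂ ∈ ℝ^K be nonnegative and satisfy p_{t,i}·ℓ̂_i ≤ 1 for i ∈ S and η̄·ℓ̂_i ≤ 1/5 for i ∈ S̄, define the correction vector a ∈ ℝ^K by a_i = 2η·p_{t,i}·ℓ̂_i² for i ∈ S and a_i = 2η̄·ℓ̂_i² for i ∈ S̄, and let p_{t+1} be a minimizer over Ω of p ↦ ⟨p, ℓ̂ + a⟩ + D_ψ(p, p_t). Then for every u ∈ Ω: ⟨p_t − u, ℓ̂⟩ ≤ D_ψ(u,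 p_t) − D_ψ(u, p_{t+1}) + ⟨u, a⟩. -/
open Finset

section Aux

lemma exp_le_key (c : ℝ) (hc : c ≤ 1/5) :
    Real.exp c ≤ 1 + c + 2*c^2 := by
  have h1 : 1 - c ≤ Real.exp (-c) := by
    have := Real.add_one_le_exp (-c); linarith
  have hpos : (0:ℝ) < 1 - c := by linarith
  have h3 : Real.exp c ≤ (1-c)⁻¹ := by
    rw [show Real.exp c = (Real.exp (-c))⁻¹ by rw [Real.exp_neg, inv_inv]]
    exact inv_anti₀ hpos h1
  have h4 : (1-c)⁻¹ ≤ 1 + c + 2*c^2 := by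
    rw [inv_le_iff_one_le_mul₀ hpos]; nlinarith
  linarith

lemma exp_neg_key (c : ℝ) (hc0 : 0 ≤ c) (hc : c ≤ 1/5) :
    Real.exp (-(c + 2*c^2)) ≤ 1 - c := by
  have h1 : 1 + (c + 2*c^2) ≤ Real.exp (c + 2*c^2) := by
    have := Real.add_one_le_exp (c + 2*c^2); linarith
  have hpos : (0:ℝ) < 1 + (c + 2*c^2) := by nlinarith
  have h2 : Real.exp (-(c+2*c^2)) ≤ (1 + (c + 2*c^2))⁻¹ := by
    rw [Real.exp_neg]; exact inv_anti₀ hpos h1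
  have h3 : (1 + (c + 2*c^2))⁻¹ ≤ 1 - c := by
    rw [inv_le_iff_one_le_mul₀ hpos]; nlinarith
  linarith

lemma norm_A (s c : ℝ) (hs : 0 < s) (hc0 : 0 ≤ c) (hc : c ≤ 1/5) :
    c*(1 - s) ≤ -Real.log s + s - 1 + 2*c^2*s := by
  set M : ℝ := 1 + c + 2*c^2 with hM
  have hMpos : 0 < M := by nlinarith
  have h1 : Real.log (M*s) ≤ M*s - 1 := Real.log_le_sub_one_of_pos (by positivity)
  have h2 : Real.log (M*s) = Real.log M + Real.log s :=
    Real.log_mul hMpos.ne' hs.ne'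
  have h3 : c ≤ Real.log M := by
    rw [Real.le_log_iff_exp_le hMpos]; exact exp_le_key c hc
  nlinarith [h1, h2, h3]

lemma norm_B (r c : ℝ) (hr : 0 < r) (hc0 : 0 ≤ c) (hc : c ≤ 1/5) :
    c*(1 - r) ≤ r*Real.log r - r + 1 + 2*c^2*r := by
  set E : ℝ := Real.exp (-(c + 2*c^2)) with hE
  have hEpos : 0 < E := Real.exp_pos _
  have hE1 : E ≤ 1 - c := exp_neg_key c hc0 hc
  have h1 : Real.log (E/r) ≤ E/r - 1 := Real.log_le_sub_one_of_pos (by positivity)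
  have h2 : Real.log (E/r) = Real.log E - Real.log r := Real.log_div hEpos.ne' hr.ne'
  have h3 : Real.log E = -(c + 2*c^2) := Real.log_exp _
  have h4 : r * Real.log r ≥ r*(-(c+2*c^2)) + r - E := by
    have : Real.log r ≥ -(c+2*c^2) + 1 - E/r := by rw [h2, h3] at h1; linarith
    have h5 : r * (E/r) = E := by field_simp
    nlinarith [this, hr]
  nlinarith [h4, hE1]

lemma coordA (x y l η : ℝ) (hx : 0 < x) (hy : 0 < y) (hl : 0 ≤ l)
    (hyl : y * l ≤ 1) (hη0 : 0 < η) (hη : η ≤ 1/5) :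
    (y - x)*l - x*(2*η*y*l^2) ≤
      (1/η)*(Real.log (1/x) - Real.log (1/y) - (-(y)⁻¹*(x - y))) := by
  have hc0 : 0 ≤ η*(y*l) := by positivity
  have hc : η*(y*l) ≤ 1/5 := by nlinarith
  have key := norm_A (x/y) (η*(y*l)) (div_pos hx hy) hc0 hc
  have hlog : Real.log (x/y) = Real.log x - Real.log y := Real.log_div hx.ne' hy.ne'
  rw [hlog] at key
  rw [one_div x, one_div y, Real.log_inv, Real.log_inv]
  rw [show (1/η) * (-Real.log x - -Real.log y - -(y)⁻¹*(x-y))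
      = (-Real.log x - -Real.log y - -(y)⁻¹*(x-y))/η by ring, le_div_iff₀ hη0]
  have e0 : η*(y*l)*(1 - x/y) = η*y*l - η*l*x := by field_simp
  have e2 : 2*(η*(y*l))^2*(x/y) = 2*η^2*y*l^2*x := by field_simp
  have e4 : (y)⁻¹*(x - y) = x/y - 1 := by field_simp
  nlinarith [key, e0, e2, e4]

lemma coordB (x y l ηb : ℝ) (hx : 0 < x) (hy : 0 < y) (hl : 0 ≤ l)
    (hηb : 0 < ηb) (hbl : ηb * l ≤ 1/5) :
    (y - x)*l - x*(2*ηb*l^2) ≤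
      (1/ηb)*(x*Real.log x - y*Real.log y - (Real.log y + 1)*(x - y)) := by
  have key := norm_B (x/y) (ηb*l) (div_pos hx hy) (by positivity) hbl
  have hlog : Real.log (x/y) = Real.log x - Real.log y := Real.log_div hx.ne' hy.ne'
  rw [hlog] at key
  rw [show (1/ηb) * (x*Real.log x - y*Real.log y - (Real.log y + 1)*(x-y))
      = (x*Real.log x - y*Real.log y - (Real.log y + 1)*(x-y))/ηb by ring,
    le_div_iff₀ hηb]
  have keym := mul_le_mul_of_nonneg_left key hy.le
  have e0 : y*(ηb*l*(1 - x/y)) = ηb*l*y - ηb*l*x := by field_simp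
  have e1 : y*((x/y)*(Real.log x - Real.log y) - x/y + 1 + 2*(ηb*l)^2*(x/y))
      = x*Real.log x - x*Real.log y - x + y + 2*ηb^2*l^2*x := by field_simp
  nlinarith [keym, e0, e1]

/-- The hybrid regularizer. -/
noncomputable def psiFun (K : ℕ) (S : Finset (Fin K)) (η ηb : ℝ) :
    (Fin K → ℝ) → ℝ :=
  fun p => (1 / η) * ∑ i ∈ S, Real.log (1 / p i)
    + (1 / ηb) * ∑ i ∈ Sᶜ, p i * Real.log (p i)

/-- Its derivative (as a continuous linear map) at `p`. -/
noncomputable def psiDeriv {K : ℕ} (S : Finset (Fin K)) (η ηb : ℝ) (p : Fin K → ℝ) :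
    (Fin K → ℝ) →L[ℝ] ℝ :=
  (1/η) • (∑ i ∈ S, (-(p i)⁻¹) • (ContinuousLinearMap.proj i : (Fin K → ℝ) →L[ℝ] ℝ))
  + (1/ηb) • (∑ i ∈ Sᶜ, (Real.log (p i) + 1) • (ContinuousLinearMap.proj i : (Fin K → ℝ) →L[ℝ] ℝ))

lemma psiDeriv_apply {K : ℕ} (S : Finset (Fin K)) (η ηb : ℝ) (p v : Fin K → ℝ) :
    psiDeriv S η ηb p v
      = (1/η) * ∑ i ∈ S, (-(p i)⁻¹ * v i)
        + (1/ηb) * ∑ i ∈ Sᶜ, ((Real.log (p i) + 1) * v i) := by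
  simp [psiDeriv, ContinuousLinearMap.sum_apply, mul_sum]

lemma hasFDerivAt_psi {K : ℕ} (S : Finset (Fin K)) (η ηb : ℝ) (p : Fin K → ℝ)
    (hp : ∀ i, 0 < p i) :
    HasFDerivAt (psiFun K S η ηb) (psiDeriv S η ηb p) p := by
  have hproj : ∀ i : Fin K, HasFDerivAt (fun q : Fin K → ℝ => q i)
      (ContinuousLinearMap.proj i : (Fin K → ℝ) →L[ℝ] ℝ) p :=
    fun i => (ContinuousLinearMap.proj i : (Fin K → ℝ) →L[ℝ] ℝ).hasFDerivAt
  have h1 : ∀ i ∈ S, HasFDerivAt (fun q : Fin K → ℝ => Real.log (1 / q i))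
      ((-(p i)⁻¹) • (ContinuousLinearMap.proj i : (Fin K → ℝ) →L[ℝ] ℝ)) p := by
    intro i _
    have hlog : HasDerivAt Real.log (p i)⁻¹ (p i) := Real.hasDerivAt_log (hp i).ne'
    have := hlog.comp_hasFDerivAt p (hproj i)
    have hneg : HasFDerivAt (fun q : Fin K → ℝ => -Real.log (q i))
        ((-(p i)⁻¹) • (ContinuousLinearMap.proj i : (Fin K → ℝ) →L[ℝ] ℝ)) p := by
      exact this.neg.congr_fderiv (neg_smul _ _).symm
    refine hneg.congr_of_eventuallyEq ?_
    filter_upwards with q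
    rw [one_div, Real.log_inv]
  have h2 : ∀ i ∈ Sᶜ, HasFDerivAt (fun q : Fin K → ℝ => q i * Real.log (q i))
      ((Real.log (p i) + 1) • (ContinuousLinearMap.proj i : (Fin K → ℝ) →L[ℝ] ℝ)) p := by
    intro i _
    have hlog : HasDerivAt (fun x : ℝ => x * Real.log x) (Real.log (p i) + 1) (p i) := by
      have := (hasDerivAt_id (p i)).mul (Real.hasDerivAt_log (hp i).ne')
      refine this.congr_deriv ?_
      simp [mul_inv_cancel₀ (hp i).ne']
    exact hlog.comp_hasFDerivAt p (hproj i)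
  have hs1 : HasFDerivAt (fun q : Fin K → ℝ => ∑ i ∈ S, Real.log (1 / q i))
      (∑ i ∈ S, (-(p i)⁻¹) • (ContinuousLinearMap.proj i : (Fin K → ℝ) →L[ℝ] ℝ)) p :=
    HasFDerivAt.fun_sum h1
  have hs2 : HasFDerivAt (fun q : Fin K → ℝ => ∑ i ∈ Sᶜ, q i * Real.log (q i))
      (∑ i ∈ Sᶜ, (Real.log (p i) + 1) • (ContinuousLinearMap.proj i : (Fin K → ℝ) →L[ℝ] ℝ)) p :=
    HasFDerivAt.fun_sum h2
  exact (hs1.const_mul _).add (hs2.const_mul _)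

end Aux

/-- Lemma 2 ('lemadahome') of the paper: one step of OMD with correction terms
under the hybrid log-barrier plus negative-entropy regularizer. -/
theorem stmt12 (K : ℕ) (hK : 1 ≤ K) (S : Finset (Fin K))
    (η ηb : ℝ) (hη0 : 0 < η) (hη : η ≤ 1 / 5) (hηb : 0 < ηb)
    (Ω : Set (Fin K → ℝ)) (hΩconv : Convex ℝ Ω) (hΩsub : Ω ⊆ stdSimplex ℝ (Fin K))
    (hΩpos : ∀ p ∈ Ω, ∀ i, 0 < p i)
    (ψ : (Fin K → ℝ) → ℝ)
    (hψ : ψ = fun p => (1 / η) * ∑ i ∈ S, Real.log (1 / p i)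
      + (1 / ηb) * ∑ i ∈ Sᶜ, p i * Real.log (p i))
    (pt : Fin K → ℝ) (hpt : pt ∈ Ω)
    (ℓ : Fin K → ℝ) (hℓ0 : ∀ i, 0 ≤ ℓ i)
    (hℓS : ∀ i ∈ S, pt i * ℓ i ≤ 1)
    (hℓSc : ∀ i ∉ S, ηb * ℓ i ≤ 1 / 5)
    (a : Fin K → ℝ)
    (ha : ∀ i, a i = if i ∈ S then 2 * η * pt i * ℓ i ^ 2 else 2 * ηb * ℓ i ^ 2)
    (pt1 : Fin K → ℝ) (hpt1 : pt1 ∈ Ω)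
    (hmin : ∀ q ∈ Ω, (∑ i, pt1 i * (ℓ i + a i)) + breg ψ pt1 pt
      ≤ (∑ i, q i * (ℓ i + a i)) + breg ψ q pt) :
    ∀ u ∈ Ω,
      ∑ i, (pt i - u i) * ℓ i ≤
        breg ψ u pt - breg ψ u pt1 + ∑ i, u i * a i := by
  have hψ' : ψ = psiFun K S η ηb := hψ
  subst hψ'
  intro u hu
  have hptpos := hΩpos pt hpt
  have hpt1pos := hΩpos pt1 hpt1
  have hfdpt := hasFDerivAt_psi S η ηb pt hptpos
  have hfdpt1 := hasFDerivAt_psi S η ηb pt1 hpt1pos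
  have hBpt : ∀ x, breg (psiFun K S η ηb) x pt
      = psiFun K S η ηb x - psiFun K S η ηb pt - psiDeriv S η ηb pt (x - pt) := by
    intro x; unfold breg; rw [hfdpt.fderiv]
  have hBpt1 : ∀ x, breg (psiFun K S η ηb) x pt1
      = psiFun K S η ηb x - psiFun K S η ηb pt1 - psiDeriv S η ηb pt1 (x - pt1) := by
    intro x; unfold breg; rw [hfdpt1.fderiv]
  -- the function along the segment from pt1 to u
  set g : ℝ → ℝ := fun t =>
    (∑ i, (pt1 i + t * (u i - pt1 i)) * (ℓ i + a i))
      + psiFun K S η ηb (pt1 + t • (u - pt1)) - psiFun K S η ηb pt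
      - psiDeriv S η ηb pt ((pt1 + t • (u - pt1)) - pt) with hgdef
  -- g is minimized at 0 on [0,1]
  have hgmin : ∀ t ∈ Set.Icc (0:ℝ) 1, g 0 ≤ g t := by
    intro t ht
    have hq : pt1 + t • (u - pt1) ∈ Ω := by
      have hmem := hΩconv hpt1 hu (by linarith [ht.2] : (0:ℝ) ≤ 1 - t) ht.1 (by ring)
      convert hmem using 1
      funext i
      simp only [Pi.add_apply, Pi.smul_apply, Pi.sub_apply, smul_eq_mul]
      ring
    have h1 := hmin (pt1 + t • (u - pt1)) hq
    rw [hBpt pt1, hBpt (pt1 + t • (u - pt1))] at h1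
    have hg0 : g 0 = (∑ i, pt1 i * (ℓ i + a i))
        + (psiFun K S η ηb pt1 - psiFun K S η ηb pt - psiDeriv S η ηb pt (pt1 - pt)) := by
      simp only [hgdef, zero_smul, add_zero, zero_mul]
      ring
    have hgt : g t = (∑ i, (pt1 + t • (u - pt1)) i * (ℓ i + a i))
        + (psiFun K S η ηb (pt1 + t • (u - pt1)) - psiFun K S η ηb pt
          - psiDeriv S η ηb pt ((pt1 + t • (u - pt1)) - pt)) := by
      simp only [hgdef, Pi.add_apply, Pi.smul_apply, Pi.sub_apply, smul_eq_mul]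
      ring
    rw [hg0, hgt]
    exact h1
  -- derivative of g at 0
  set d : ℝ := (∑ i, (u i - pt1 i) * (ℓ i + a i))
      + psiDeriv S η ηb pt1 (u - pt1) - psiDeriv S η ηb pt (u - pt1) with hddef
  have hline : HasDerivAt (fun t : ℝ => pt1 + t • (u - pt1)) (u - pt1) 0 := by
    simpa using ((hasDerivAt_id (0:ℝ)).smul_const (u - pt1)).const_add pt1
  have hcomp : HasDerivAt (fun t : ℝ => psiFun K S η ηb (pt1 + t • (u - pt1)))
      (psiDeriv S η ηb pt1 (u - pt1)) 0 := by
    have h0 : HasFDerivAt (psiFun K S η ηb) (psiDeriv S η ηb pt1)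
        (pt1 + (0:ℝ) • (u - pt1)) := by simpa using hfdpt1
    exact h0.comp_hasDerivAt 0 hline
  have hA : HasDerivAt (fun t : ℝ => ∑ i, (pt1 i + t * (u i - pt1 i)) * (ℓ i + a i))
      (∑ i, (u i - pt1 i) * (ℓ i + a i)) 0 := by
    apply HasDerivAt.fun_sum
    intro i _
    have := (((hasDerivAt_id (0:ℝ)).mul_const (u i - pt1 i)).const_add (pt1 i)).mul_const
      (ℓ i + a i)
    simpa using this
  have hL : HasDerivAt (fun t : ℝ => psiDeriv S η ηb pt ((pt1 + t • (u - pt1)) - pt))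
      (psiDeriv S η ηb pt (u - pt1)) 0 := by
    have heq : (fun t : ℝ => psiDeriv S η ηb pt ((pt1 + t • (u - pt1)) - pt))
        = fun t : ℝ => psiDeriv S η ηb pt (pt1 - pt) + t * psiDeriv S η ηb pt (u - pt1) := by
      funext t
      rw [show (pt1 + t • (u - pt1)) - pt = (pt1 - pt) + t • (u - pt1) by abel,
        map_add, map_smul, smul_eq_mul]
    rw [heq]
    simpa using ((hasDerivAt_id (0:ℝ)).mul_const
      (psiDeriv S η ηb pt (u - pt1))).const_add (psiDeriv S η ηb pt (pt1 - pt))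
  have hgd : HasDerivAt g d 0 := by
    rw [hgdef, hddef]
    exact ((hA.add hcomp).sub_const (psiFun K S η ηb pt)).sub hL
  -- first-order optimality: d ≥ 0
  have hd0 : 0 ≤ d := by
    have htends : Filter.Tendsto (slope g 0) (nhdsWithin 0 (Set.Ioi 0)) (nhds d) :=
      (hasDerivAt_iff_tendsto_slope.mp hgd).mono_left
        (nhdsWithin_mono 0 (fun x hx => ne_of_gt hx))
    refine ge_of_tendsto htends ?_
    filter_upwards [Ioc_mem_nhdsGT_of_mem (Set.left_mem_Ico.mpr one_pos)] with t ht
    have hge := hgmin t ⟨ht.1.le, ht.2⟩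
    rw [slope_def_field]
    apply div_nonneg (by linarith) (by linarith [ht.1])
  have hfo : 0 ≤ (∑ i, (u i - pt1 i) * (ℓ i + a i))
      + psiDeriv S η ηb pt1 (u - pt1) - psiDeriv S η ηb pt (u - pt1) := hd0
  -- three-point identity
  have h3p : breg (psiFun K S η ηb) u pt - breg (psiFun K S η ηb) u pt1
      = breg (psiFun K S η ηb) pt1 pt
        + (psiDeriv S η ηb pt1 (u - pt1) - psiDeriv S η ηb pt (u - pt1)) := by
    rw [hBpt u, hBpt1 u, hBpt pt1]
    have hsplit : psiDeriv S η ηb pt (u - pt)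
        = psiDeriv S η ηb pt (u - pt1) + psiDeriv S η ηb pt (pt1 - pt) := by
      rw [← map_add]; congr 1; abel
    rw [hsplit]; ring
  -- stability: the expanded Bregman divergence between pt1 and pt
  have hbb : breg (psiFun K S η ηb) pt1 pt
      = (∑ i ∈ S, (1/η)*(Real.log (1/pt1 i) - Real.log (1/pt i) - (-(pt i)⁻¹*(pt1 i - pt i))))
        + ∑ i ∈ Sᶜ, (1/ηb)*(pt1 i*Real.log (pt1 i) - pt i*Real.log (pt i)
            - (Real.log (pt i) + 1)*(pt1 i - pt i)) := by
    rw [hBpt pt1]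
    simp only [psiDeriv_apply, psiFun, Pi.sub_apply, Finset.mul_sum, mul_sub,
      Finset.sum_sub_distrib]
    ring
  have hstab : ∑ i, ((pt i - pt1 i) * ℓ i - pt1 i * a i) ≤ breg (psiFun K S η ηb) pt1 pt := by
    rw [hbb, ← Finset.sum_add_sum_compl S (fun i => (pt i - pt1 i) * ℓ i - pt1 i * a i)]
    refine add_le_add (Finset.sum_le_sum ?_) (Finset.sum_le_sum ?_)
    · intro i hi
      rw [ha i, if_pos hi]
      exact coordA (pt1 i) (pt i) (ℓ i) η (hpt1pos i) (hptpos i) (hℓ0 i) (hℓS i hi) hη0 hη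
    · intro i hi
      rw [ha i, if_neg (Finset.mem_compl.mp hi)]
      exact coordB (pt1 i) (pt i) (ℓ i) ηb (hpt1pos i) (hptpos i) (hℓ0 i) hηb
        (hℓSc i (Finset.mem_compl.mp hi))
  -- combine
  have hE : ∑ i, (u i - pt1 i) * (ℓ i + a i)
      - ∑ i, ((pt i - pt1 i) * ℓ i - pt1 i * a i)
      - ∑ i, u i * a i + ∑ i, (pt i - u i) * ℓ i = 0 := by
    rw [← Finset.sum_sub_distrib, ← Finset.sum_sub_distrib, ← Finset.sum_add_distrib]
    apply Finset.sum_eq_zero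
    intro i _
    ring
  linarith [hfo, h3p, hstab, hE]
end
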